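/- arXiv:2204.08300 — 2 statements merged into one kernel-verified Lean document; each statement's English description precedes it below -/
import Mathlib

section
/- For any priority π, the draft rule φ^π is robust against trades: for every problem (≿, X), the relation ▶ on agent–object pairs defined by (i,x) ▶ (j,y) iff x ∈ φ^π_i(≿, X), y ≻_i x, and i ≠ j, is acyclic. -/
open Finset

noncomputable section

abbrev Obj := ℕ

def PD (r : Obj → Obj → Prop) (S T : Finset Obj) : Prop :=
  ∃ μ : {x // x ∈ T} → {x // x ∈ S}, Function.Injective μ ∧ ∀ x, r (μ x).1 x.1

def StrictPD (r : Obj → Obj → Prop) (S T : Finset Obj) : Prop :=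
  PD r S T ∧ ¬ PD r T S

def LinProfile {n : ℕ} (pref : Fin n → Obj → Obj → Prop) : Prop :=
  ∀ i, IsLinearOrder Obj (pref i)

def IsAlloc {n : ℕ} (A : Fin n → Finset Obj) (X : Finset Obj) : Prop :=
  (∀ i, A i ⊆ X) ∧ ∀ i j, i ≠ j → Disjoint (A i) (A j)

open Classical in
def topOf (r : Obj → Obj → Prop) (X : Finset Obj) : Obj :=
  if h : ∃ m ∈ X, ∀ x ∈ X, r m x then h.choose else 0

def remaining {n : ℕ} (pref : Fin n → Obj → Obj → Prop) (f : ℕ → Fin n)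
    (X : Finset Obj) : ℕ → Finset Obj
  | 0 => X
  | k + 1 => (remaining pref f X k).erase (topOf (pref (f k)) (remaining pref f X k))

def draft {n : ℕ} (pref : Fin n → Obj → Obj → Prop) (f : ℕ → Fin n)
    (X : Finset Obj) (i : Fin n) : Finset Obj :=
  ((Finset.range X.card).filter (fun k => f k = i)).image
    (fun k => topOf (pref (f k)) (remaining pref f X k))

def roundRobin {n : ℕ} (hn : 0 < n) (π : Equiv.Perm (Fin n)) (k : ℕ) : Fin n :=
  π.symm ⟨k % n, Nat.mod_lt k hn⟩

def draftPi {n : ℕ} (hn : 0 < n) (pref : Fin n → Obj → Obj → Prop)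
    (π : Equiv.Perm (Fin n)) (X : Finset Obj) (i : Fin n) : Finset Obj :=
  draft pref (roundRobin hn π) X i


lemma exists_top (r : Obj → Obj → Prop) [IsLinearOrder Obj r] {S : Finset Obj}
    (hS : S.Nonempty) : ∃ m ∈ S, ∀ x ∈ S, r m x := by
  classical
  induction S using Finset.induction_on with
  | empty => exact absurd hS (by simp)
  | @insert a S ha IH =>
    rcases S.eq_empty_or_nonempty with rfl | hS'
    · refine ⟨a, by simp, fun x hx => ?_⟩
      simp only [Finset.mem_insert, Finset.notMem_empty, or_false] at hx
      subst hx
      exact refl_of r x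
    · obtain ⟨m, hm, hmax⟩ := IH hS'
      rcases total_of r a m with h | h
      · refine ⟨a, Finset.mem_insert_self _ _, fun x hx => ?_⟩
        rcases Finset.mem_insert.1 hx with rfl | hx
        · exact refl_of r x
        · exact trans_of r h (hmax x hx)
      · refine ⟨m, Finset.mem_insert_of_mem hm, fun x hx => ?_⟩
        rcases Finset.mem_insert.1 hx with rfl | hx
        · exact h
        · exact hmax x hx

lemma topOf_spec (r : Obj → Obj → Prop) [IsLinearOrder Obj r] {S : Finset Obj}
    (hS : S.Nonempty) : topOf r S ∈ S ∧ ∀ x ∈ S, r (topOf r S) x := by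
  have h : ∃ m ∈ S, ∀ x ∈ S, r m x := exists_top r hS
  rw [topOf, dif_pos h]
  exact ⟨h.choose_spec.1, h.choose_spec.2⟩

lemma remaining_antitone {n : ℕ} (pref : Fin n → Obj → Obj → Prop) (f : ℕ → Fin n)
    (X : Finset Obj) {k k' : ℕ} (h : k ≤ k') :
    remaining pref f X k' ⊆ remaining pref f X k := by
  induction k' with
  | zero => simpa [Nat.le_zero.1 h] using Finset.Subset.refl _
  | succ k' IH =>
    rcases Nat.lt_or_ge k (k' + 1) with h' | h'
    · exact (Finset.erase_subset _ _).trans (IH (Nat.lt_succ_iff.1 h'))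
    · have : k = k' + 1 := le_antisymm h h'
      subst this; exact Finset.Subset.refl _

lemma remaining_card {n : ℕ} {pref : Fin n → Obj → Obj → Prop}
    (hpref : LinProfile pref) (f : ℕ → Fin n) (X : Finset Obj) :
    ∀ k, k ≤ X.card → (remaining pref f X k).card = X.card - k := by
  intro k
  induction k with
  | zero => simp [remaining]
  | succ k IH =>
    intro hk
    have hk' : k ≤ X.card := Nat.le_of_succ_le hk
    have hcard := IH hk'
    have hne : (remaining pref f X k).Nonempty := by
      rw [← Finset.card_pos, hcard]
      omega
    haveI := hpref (f k)
    have hmem := (topOf_spec (pref (f k)) hne).1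
    rw [remaining, Finset.card_erase_of_mem hmem, hcard]
    omega

lemma remaining_nonempty {n : ℕ} {pref : Fin n → Obj → Obj → Prop}
    (hpref : LinProfile pref) (f : ℕ → Fin n) (X : Finset Obj) {k : ℕ}
    (hk : k < X.card) : (remaining pref f X k).Nonempty := by
  rw [← Finset.card_pos, remaining_card hpref f X k (le_of_lt hk)]
  omega

theorem draft_robust_against_trades {n : ℕ} (hn : 0 < n) (π : Equiv.Perm (Fin n))
    (pref : Fin n → Obj → Obj → Prop) (hpref : LinProfile pref)
    (X : Finset Obj) (hX : X.Nonempty) :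
    ∀ p : Fin n × Obj,
      ¬ Relation.TransGen
        (fun p q : Fin n × Obj =>
          p.2 ∈ draftPi hn pref π X p.1 ∧ pref p.1 q.2 p.2 ∧ q.2 ≠ p.2 ∧ p.1 ≠ q.1)
        p p := by
  classical
  set f := roundRobin hn π with hf
  set R : Fin n × Obj → Fin n × Obj → Prop := fun p q =>
    p.2 ∈ draftPi hn pref π X p.1 ∧ pref p.1 q.2 p.2 ∧ q.2 ≠ p.2 ∧ p.1 ≠ q.1 with hR
  set P : Fin n × Obj → ℕ → Prop := fun p k =>
    k < X.card ∧ f k = p.1 ∧ topOf (pref (f k)) (remaining pref f X k) = p.2 with hP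
  have halloc : ∀ p : Fin n × Obj, p.2 ∈ draftPi hn pref π X p.1 → ∃ k, P p k := by
    intro p hp
    rw [draftPi, draft] at hp
    obtain ⟨k, hk, hk2⟩ := Finset.mem_image.1 hp
    rw [Finset.mem_filter, Finset.mem_range] at hk
    exact ⟨k, hk.1, hk.2, hk2⟩
  set m : Fin n × Obj → ℕ := fun p => if h : ∃ k, P p k then h.choose else 0 with hm
  have hmspec : ∀ p : Fin n × Obj, p.2 ∈ draftPi hn pref π X p.1 → P p (m p) := by
    intro p hp
    have h' := halloc p hp
    simp only [hm, dif_pos h']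
    exact h'.choose_spec
  have key : ∀ p q, R p q → q.2 ∈ draftPi hn pref π X q.1 → m q < m p := by
    intro p q hpq hq
    obtain ⟨hp, hpref2, hne, hne'⟩ := hpq
    obtain ⟨hkp, hfp, htp⟩ := hmspec p hp
    obtain ⟨hkq, hfq, htq⟩ := hmspec q hq
    haveI := hpref (f (m q))
    haveI := hpref p.1
    haveI := hpref (f (m p))
    have hyq : q.2 ∈ remaining pref f X (m q) := by
      rw [← htq]
      exact (topOf_spec (pref (f (m q))) (remaining_nonempty hpref f X hkq)).1
    have hyp : q.2 ∉ remaining pref f X (m p) := by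
      intro hmem
      have := (topOf_spec (pref (f (m p)))
        (remaining_nonempty hpref f X hkp)).2 q.2 hmem
      rw [htp, hfp] at this
      exact hne (antisymm hpref2 this)
    by_contra hle
    push_neg at hle
    exact hyp (remaining_antitone pref f X hle hyq)
  intro p hcyc
  have main : ∀ a b : Fin n × Obj, Relation.TransGen R a b →
      a.2 ∈ draftPi hn pref π X a.1 ∧ (b.2 ∈ draftPi hn pref π X b.1 → m b < m a) := by
    intro a b h
    induction h with
    | single h => exact ⟨h.1, fun hb => key _ _ h hb⟩
    | tail h h' IH =>
      exact ⟨IH.1, fun hb => lt_trans (key _ _ h' hb) (IH.2 h'.1)⟩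
  obtain ⟨hp, h2⟩ := main p p hcyc
  exact lt_irrefl _ (h2 hp)
end
end

section
/- There is no allocation rule satisfying Pareto efficiency with respect to pairwise dominance, envy-freeness up to one object, and weak strategy-proofness, for any number n ≥ 2 of agents. -/
open Finset

noncomputable section

-- Auxiliary definitions and lemmas

def vrel (v : ℕ → ℕ) : Obj → Obj → Prop := fun a b => v a ≤ v b

instance vrel_dec (v : ℕ → ℕ) (a b : Obj) : Decidable (vrel v a b) := Nat.decLe _ _

lemma vrel_lin {v : ℕ → ℕ} (hv : Function.Injective v) : IsLinearOrder Obj (vrel v) where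
  refl a := Nat.le_refl _
  trans a b c := Nat.le_trans
  antisymm a b h1 h2 := hv (Nat.le_antisymm h1 h2)
  total a b := Nat.le_total _ _

lemma pd_of_subset {r : Obj → Obj → Prop} (hr : ∀ a, r a a) {S T : Finset Obj} (h : T ⊆ S) :
    PD r S T := by
  refine ⟨fun x => ⟨x.1, h x.2⟩, ?_, fun x => hr x.1⟩
  intro x y hxy
  have h2 := congrArg Subtype.val hxy
  exact Subtype.ext h2

lemma pd_pair {r : Obj → Obj → Prop} {S : Finset Obj} {a b c d : Obj}
    (ha : a ∈ S) (hb : b ∈ S) (hab : a ≠ b) (h1 : r a c) (h2 : r b d) :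
    PD r S {c, d} := by
  refine ⟨fun x => if x.1 = c then ⟨a, ha⟩ else ⟨b, hb⟩, ?_, ?_⟩
  · intro x y hxy
    by_cases hx : x.1 = c <;> by_cases hy : y.1 = c <;> simp only [hx, hy, if_pos, if_true,
      if_false, if_neg, reduceIte] at hxy
    · exact Subtype.ext (hx.trans hy.symm)
    · exact absurd (congrArg Subtype.val hxy) hab
    · exact absurd (congrArg Subtype.val hxy).symm hab
    · have hx' : x.1 = d := by
        have := x.2; simp only [Finset.mem_insert, Finset.mem_singleton] at this; tauto
      have hy' : y.1 = d := by
        have := y.2; simp only [Finset.mem_insert, Finset.mem_singleton] at this; tauto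
      exact Subtype.ext (hx'.trans hy'.symm)
  · intro x
    by_cases hx : x.1 = c
    · simp only [hx, reduceIte]
      exact h1
    · have hx' : x.1 = d := by
        have := x.2; simp only [Finset.mem_insert, Finset.mem_singleton] at this; tauto
      simp only [hx, if_neg, reduceIte]
      rw [hx']
      exact h2

lemma not_pd_blocked {r : Obj → Obj → Prop} {S T : Finset Obj} {t : Obj}
    (ht : t ∈ T) (h : ∀ s ∈ S, ¬ r s t) : ¬ PD r S T := by
  rintro ⟨μ, _, hμ⟩
  exact h (μ ⟨t, ht⟩).1 (μ ⟨t, ht⟩).2 (hμ ⟨t, ht⟩)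

lemma not_pd_two {r : Obj → Obj → Prop} {S T : Finset Obj} {t1 t2 s0 : Obj}
    (h1 : t1 ∈ T) (h2 : t2 ∈ T) (hne : t1 ≠ t2)
    (ha : ∀ s ∈ S, r s t1 → s = s0) (hb : ∀ s ∈ S, r s t2 → s = s0) : ¬ PD r S T := by
  rintro ⟨μ, hinj, hμ⟩
  have e1 : (μ ⟨t1, h1⟩).1 = s0 := ha _ (μ _).2 (hμ _)
  have e2 : (μ ⟨t2, h2⟩).1 = s0 := hb _ (μ _).2 (hμ _)
  have : (⟨t1, h1⟩ : {x // x ∈ T}) = ⟨t2, h2⟩ := hinj (Subtype.ext (e1.trans e2.symm))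
  exact hne (congrArg Subtype.val this)

lemma pd_card {r : Obj → Obj → Prop} {S T : Finset Obj} (h : PD r S T) : T.card ≤ S.card := by
  obtain ⟨μ, hinj, -⟩ := h
  simpa using Fintype.card_le_of_injective μ hinj

lemma ef1_kill {r : Obj → Obj → Prop} {Ai Aj : Finset Obj} {t1 t2 : Obj}
    (h1 : t1 ∈ Ai) (h2 : t2 ∈ Ai) (hne : t1 ≠ t2)
    (hk : ∀ s ∈ Aj, ¬ r s t1 ∧ ¬ r s t2) :
    ¬ ∃ S ⊆ Ai, S.card ≤ 1 ∧ PD r Aj (Ai \ S) := by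
  rintro ⟨S, hS, hc, hpd⟩
  have hor : t1 ∉ S ∨ t2 ∉ S := by
    by_contra h; push_neg at h
    have hsub : ({t1, t2} : Finset Obj) ⊆ S := by
      intro x hx; simp only [Finset.mem_insert, Finset.mem_singleton] at hx
      rcases hx with rfl | rfl
      exacts [h.1, h.2]
    have := Finset.card_le_card hsub
    rw [Finset.card_pair hne] at this; omega
  rcases hor with h | h
  · exact not_pd_blocked (Finset.mem_sdiff.2 ⟨h1, h⟩) (fun s hs => (hk s hs).1) hpd
  · exact not_pd_blocked (Finset.mem_sdiff.2 ⟨h2, h⟩) (fun s hs => (hk s hs).2) hpd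

lemma pd_top2 {v : ℕ → ℕ} (hv : Function.Injective v) {S T : Finset Obj} {a b : Obj}
    (ha : a ∈ S) (hb : b ∈ S) (h0 : v a = 0) (h1 : v b = 1) (hT : T.card = 2) :
    PD (vrel v) S T := by
  obtain ⟨p, q, hpq, rfl⟩ := Finset.card_eq_two.1 hT
  have hab : a ≠ b := fun h => by rw [h, h1] at h0; omega
  by_cases hp : p = a
  · have hvp : v p = 0 := by rw [hp]; exact h0
    have hq0 : v q ≠ 0 := fun h => hpq (hv (hvp.trans h.symm))
    exact pd_pair ha hb hab (show v a ≤ v p by omega) (show v b ≤ v q by omega)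
  · by_cases hq : q = a
    · have hvq : v q = 0 := by rw [hq]; exact h0
      have hp0 : v p ≠ 0 := fun h => hpq (hv (h.trans hvq.symm))
      exact pd_pair hb ha hab.symm (show v b ≤ v p by omega) (show v a ≤ v q by omega)
    · have hp0 : v p ≠ 0 := fun h => hp (hv (h.trans h0.symm))
      have hq0 : v q ≠ 0 := fun h => hq (hv (h.trans h0.symm))
      exact pd_pair ha hb hab (show v a ≤ v p by omega) (show v b ≤ v q by omega)

def core : Finset ℕ := {0, 1, 2, 3}

def XX (n : ℕ) : Finset ℕ := Finset.range (2 * n)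

def pin (n : ℕ) (S0 S1 : Finset ℕ) : Fin n → Finset ℕ :=
  fun k => if k.val = 0 then S0 else if k.val = 1 then S1 else {2 * k.val, 2 * k.val + 1}

def vex (k : ℕ) : ℕ → ℕ := fun x =>
  if x = 2 * k then 0 else if x = 2 * k + 1 then 1
  else if x = 0 then 2 * k else if x = 1 then 2 * k + 1 else x

lemma vex_inj (k : ℕ) : Function.Injective (vex k) := by
  intro a b h
  simp only [vex] at h
  split_ifs at h <;> omega

def prof (n : ℕ) (va vb : ℕ → ℕ) : Fin n → Obj → Obj → Prop :=
  fun k => if k.val = 0 then vrel va else if k.val = 1 then vrel vb else vrel (vex k.val)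

lemma prof_lin {n : ℕ} {va vb : ℕ → ℕ} (hva : Function.Injective va)
    (hvb : Function.Injective vb) : LinProfile (prof n va vb) := by
  intro i
  unfold prof
  split_ifs
  · exact vrel_lin hva
  · exact vrel_lin hvb
  · exact vrel_lin (vex_inj _)

lemma prof_refl {n : ℕ} (va vb : ℕ → ℕ) (i : Fin n) (a : Obj) : prof n va vb i a a := by
  unfold prof
  split_ifs <;> exact Nat.le_refl _

lemma mem_core_iff {x : ℕ} : x ∈ core ↔ x < 4 := by
  unfold core
  simp only [Finset.mem_insert, Finset.mem_singleton]
  omega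

lemma core_subset_XX {n : ℕ} (hn : 2 ≤ n) : core ⊆ XX n := by
  intro x hx
  rw [mem_core_iff] at hx
  rw [XX, Finset.mem_range]
  omega

lemma core_card : core.card = 4 := by decide

lemma v_core_lt {v : ℕ → ℕ} (hv : Function.Injective v) (hv4 : ∀ x, 4 ≤ x → v x = x)
    {c : ℕ} (hc : c ∈ core) : v c < 4 := by
  by_contra h
  push_neg at h
  have h2 : v (v c) = v c := hv4 _ h
  have h3 : c = v c := hv h2.symm
  rw [mem_core_iff] at hc
  omega

lemma pd_fill {v : ℕ → ℕ} (hv : Function.Injective v) (hv4 : ∀ x, 4 ≤ x → v x = x)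
    {S T : Finset ℕ} (hS : S ⊆ core) (hSc : S.card = 2) (hTc : T.card = 2)
    (hTC : T ∩ core ⊆ S) : PD (vrel v) S T := by
  obtain ⟨p, q, hpq, rfl⟩ := Finset.card_eq_two.1 hTc
  have hmemp : p ∈ ({p, q} : Finset ℕ) := Finset.mem_insert_self _ _
  have hmemq : q ∈ ({p, q} : Finset ℕ) := Finset.mem_insert_of_mem (Finset.mem_singleton_self _)
  obtain ⟨x, y, hxy, hSxy⟩ := Finset.card_eq_two.1 hSc
  have hxS : x ∈ S := by rw [hSxy]; exact Finset.mem_insert_self _ _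
  have hyS : y ∈ S := by rw [hSxy]; exact Finset.mem_insert_of_mem (Finset.mem_singleton_self _)
  have hvx : v x < 4 := v_core_lt hv hv4 (hS hxS)
  have hvy : v y < 4 := v_core_lt hv hv4 (hS hyS)
  by_cases hp : p ∈ core <;> by_cases hq : q ∈ core
  · refine pd_of_subset (r := vrel v) (fun a => Nat.le_refl _) ?_
    intro z hz
    rcases Finset.mem_insert.1 hz with rfl | hz'
    · exact hTC (Finset.mem_inter.2 ⟨hmemp, hp⟩)
    · rw [Finset.mem_singleton] at hz'
      subst hz'
      exact hTC (Finset.mem_inter.2 ⟨hmemq, hq⟩)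
  · have hpS : p ∈ S := hTC (Finset.mem_inter.2 ⟨hmemp, hp⟩)
    have hq4 : 4 ≤ q := by rw [mem_core_iff] at hq; omega
    have hvq : v q = q := hv4 _ hq4
    by_cases hpx : p = x
    · refine pd_pair hxS hyS hxy ?_ (show v y ≤ v q by omega)
      rw [hpx]; exact Nat.le_refl _
    · have hpy : p = y := by
        rw [hSxy] at hpS
        rcases Finset.mem_insert.1 hpS with h | h
        · exact absurd h hpx
        · exact Finset.mem_singleton.1 h
      refine pd_pair hyS hxS hxy.symm ?_ (show v x ≤ v q by omega)
      rw [hpy]; exact Nat.le_refl _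
  · have hqS : q ∈ S := hTC (Finset.mem_inter.2 ⟨hmemq, hq⟩)
    have hp4 : 4 ≤ p := by rw [mem_core_iff] at hp; omega
    have hvp : v p = p := hv4 _ hp4
    by_cases hqx : q = x
    · refine pd_pair hyS hxS (Ne.symm hxy) (show v y ≤ v p by omega) ?_
      rw [hqx]; exact Nat.le_refl _
    · have hqy : q = y := by
        rw [hSxy] at hqS
        rcases Finset.mem_insert.1 hqS with h | h
        · exact absurd h hqx
        · exact Finset.mem_singleton.1 h
      refine pd_pair hxS hyS hxy (show v x ≤ v p by omega) ?_
      rw [hqy]; exact Nat.le_refl _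
  · have hp4 : 4 ≤ p := by rw [mem_core_iff] at hp; omega
    have hq4 : 4 ≤ q := by rw [mem_core_iff] at hq; omega
    have hvp : v p = p := hv4 _ hp4
    have hvq : v q = q := hv4 _ hq4
    exact pd_pair hxS hyS hxy (show v x ≤ v p by omega) (show v y ≤ v q by omega)

lemma pin_cases {n : ℕ} (S0 S1 : Finset ℕ) (k : Fin n) :
    (k.val = 0 ∧ pin n S0 S1 k = S0) ∨ (k.val = 1 ∧ pin n S0 S1 k = S1) ∨
    (2 ≤ k.val ∧ pin n S0 S1 k = {2 * k.val, 2 * k.val + 1}) := by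
  by_cases h0 : k.val = 0
  · exact Or.inl ⟨h0, by unfold pin; rw [if_pos h0]⟩
  · by_cases h1 : k.val = 1
    · exact Or.inr (Or.inl ⟨h1, by unfold pin; rw [if_neg h0, if_pos h1]⟩)
    · exact Or.inr (Or.inr ⟨by omega, by unfold pin; rw [if_neg h0, if_neg h1]⟩)

lemma isAlloc_intro {n : ℕ} {A : Fin n → Finset ℕ} {X : Finset ℕ}
    (h1 : ∀ i, A i ⊆ X) (h2 : ∀ i j, i ≠ j → Disjoint (A i) (A j)) : IsAlloc A X :=
  ⟨h1, h2⟩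

lemma pin_alloc {n : ℕ} (hn : 2 ≤ n) {S0 S1 : Finset ℕ} (h0 : S0 ⊆ core) (h1 : S1 ⊆ core)
    (hd : Disjoint S0 S1) : IsAlloc (pin n S0 S1) (XX n) := by
  have hcore_pair : ∀ (k : Fin n), 2 ≤ k.val → ∀ (S : Finset ℕ), S ⊆ core →
      Disjoint S ({2 * k.val, 2 * k.val + 1} : Finset ℕ) := by
    intro k hk S hS
    rw [Finset.disjoint_left]
    intro x hx hx2
    have h3 := mem_core_iff.1 (hS hx)
    simp only [Finset.mem_insert, Finset.mem_singleton] at hx2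
    omega
  apply isAlloc_intro
  · intro i
    rcases pin_cases S0 S1 i with ⟨hi, ei⟩ | ⟨hi, ei⟩ | ⟨hi, ei⟩ <;> rw [ei]
    · exact h0.trans (core_subset_XX hn)
    · exact h1.trans (core_subset_XX hn)
    · intro x hx
      simp only [Finset.mem_insert, Finset.mem_singleton] at hx
      rw [XX, Finset.mem_range]
      have := i.isLt
      omega
  · intro i j hij
    have hvij : i.val ≠ j.val := fun h => hij (Fin.ext h)
    have hpp : ∀ (k l : Fin n), k.val ≠ l.val →
        Disjoint ({2 * k.val, 2 * k.val + 1} : Finset ℕ) {2 * l.val, 2 * l.val + 1} := by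
      intro k l hkl
      rw [Finset.disjoint_left]
      intro x hx hx2
      simp only [Finset.mem_insert, Finset.mem_singleton] at hx hx2
      omega
    rcases pin_cases S0 S1 i with ⟨hi, ei⟩ | ⟨hi, ei⟩ | ⟨hi, ei⟩ <;>
      rcases pin_cases S0 S1 j with ⟨hj, ej⟩ | ⟨hj, ej⟩ | ⟨hj, ej⟩ <;> rw [ei, ej]
    · exact absurd (hi.trans hj.symm) hvij
    · exact hd
    · exact hcore_pair j hj S0 h0
    · exact hd.symm
    · exact absurd (hi.trans hj.symm) hvij
    · exact hcore_pair j hj S1 h1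
    · exact (hcore_pair i hi S0 h0).symm
    · exact (hcore_pair i hi S1 h1).symm
    · exact hpp i j hvij

lemma structure_lemma {n : ℕ} (hn : 2 ≤ n)
    (φ : (Fin n → Obj → Obj → Prop) → Finset Obj → Fin n → Finset Obj)
    (va vb : ℕ → ℕ) (hva : Function.Injective va) (hvb : Function.Injective vb)
    (hva4 : ∀ x, 4 ≤ x → va x = x) (hvb4 : ∀ x, 4 ≤ x → vb x = x)
    (hAl : IsAlloc (φ (prof n va vb) (XX n)) (XX n))
    (hEFF : ¬ ∃ B : Fin n → Finset Obj, IsAlloc B (XX n) ∧ B ≠ φ (prof n va vb) (XX n) ∧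
      ∀ i, PD (prof n va vb i) (B i) (φ (prof n va vb) (XX n) i))
    (hEF1 : ∀ i j : Fin n, ∃ S ⊆ φ (prof n va vb) (XX n) i, S.card ≤ 1 ∧
      PD (prof n va vb j) (φ (prof n va vb) (XX n) j) (φ (prof n va vb) (XX n) i \ S)) :
    ∃ S0 : Finset ℕ, S0 ⊆ core ∧ S0.card = 2 ∧
      φ (prof n va vb) (XX n) = pin n S0 (core \ S0) := by
  have h0n : 0 < n := by omega
  have h1n : 1 < n := by omega
  set A := φ (prof n va vb) (XX n) with hA
  set i0 : Fin n := ⟨0, h0n⟩ with hi0def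
  set i1 : Fin n := ⟨1, h1n⟩ with hi1def
  -- step 1 : full coverage
  have hcover : ∀ x ∈ XX n, ∃ i, x ∈ A i := by
    intro x hx
    by_contra hno
    push_neg at hno
    apply hEFF
    refine ⟨Function.update A i0 (insert x (A i0)), ⟨?_, ?_⟩, ?_, ?_⟩
    · intro i
      by_cases hi : i = i0
      · subst hi
        rw [Function.update_self]
        exact Finset.insert_subset hx (hAl.1 _)
      · rw [Function.update_of_ne hi]
        exact hAl.1 i
    · intro i j hij
      by_cases hi : i = i0
      · subst hi
        have hj : j ≠ i0 := fun h => hij h.symm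
        rw [Function.update_self, Function.update_of_ne hj]
        exact Finset.disjoint_insert_left.2 ⟨hno j, hAl.2 _ _ hij⟩
      · by_cases hj : j = i0
        · subst hj
          rw [Function.update_self, Function.update_of_ne hi]
          exact Finset.disjoint_insert_right.2 ⟨hno i, hAl.2 _ _ hij⟩
        · rw [Function.update_of_ne hi, Function.update_of_ne hj]
          exact hAl.2 _ _ hij
    · intro h
      have h2 := congrFun h i0
      rw [Function.update_self] at h2
      exact hno i0 (by rw [← h2]; exact Finset.mem_insert_self _ _)
    · intro i
      by_cases hi : i = i0
      · subst hi
        rw [Function.update_self]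
        exact pd_of_subset (prof_refl va vb _) (Finset.subset_insert _ _)
      · rw [Function.update_of_ne hi]
        exact pd_of_subset (prof_refl va vb _) (Finset.Subset.refl _)
  -- step 2 : cardinalities
  have hle : ∀ i j : Fin n, (A i).card ≤ (A j).card + 1 := by
    intro i j
    obtain ⟨S, hS, hc, hpd⟩ := hEF1 i j
    have h1 := pd_card hpd
    have h2 : (A i \ S).card = (A i).card - S.card := Finset.card_sdiff_of_subset hS
    have h3 : S.card ≤ (A i).card := Finset.card_le_card hS
    omega
  have hsum : ∑ i, (A i).card = 2 * n := by
    have hXeq : XX n = Finset.univ.biUnion A := by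
      apply Finset.Subset.antisymm
      · intro x hx
        obtain ⟨i, hi⟩ := hcover x hx
        exact Finset.mem_biUnion.2 ⟨i, Finset.mem_univ _, hi⟩
      · intro x hx
        obtain ⟨i, -, hi⟩ := Finset.mem_biUnion.1 hx
        exact hAl.1 i hi
    have h1 : (XX n).card = 2 * n := Finset.card_range _
    rw [hXeq] at h1
    rw [← h1]
    exact (Finset.card_biUnion (fun i _ j _ hij => hAl.2 i j hij)).symm
  have hcard : ∀ i, (A i).card = 2 := by
    intro i
    have herase : ∑ j ∈ Finset.univ.erase i, (A j).card + (A i).card = ∑ j, (A j).card :=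
      Finset.sum_erase_add _ _ (Finset.mem_univ i)
    have hcarde : (Finset.univ.erase i).card = n - 1 := by
      rw [Finset.card_erase_of_mem (Finset.mem_univ i), Finset.card_univ, Fintype.card_fin]
    by_contra hne
    rcases Nat.lt_or_ge (A i).card 2 with h | h
    · have hub : ∀ j ∈ Finset.univ.erase i, (A j).card ≤ 2 := by
        intro j _
        have := hle j i
        omega
      have h2 := Finset.sum_le_sum hub
      rw [Finset.sum_const, smul_eq_mul, hcarde] at h2
      omega
    · have hlb : ∀ j ∈ Finset.univ.erase i, 2 ≤ (A j).card := by
        intro j _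
        have := hle i j
        omega
      have h2 := Finset.sum_le_sum hlb
      rw [Finset.sum_const, smul_eq_mul, hcarde] at h2
      omega
  -- step 3 : pinning via EFF
  have hdisj01 : Disjoint (A i0) (A i1) :=
    hAl.2 _ _ (by rw [hi0def, hi1def]; exact Fin.ne_of_val_ne Nat.zero_ne_one)
  have hC0sub : A i0 ∩ core ⊆ core \ (A i1 ∩ core) := by
    intro x hx
    rw [Finset.mem_sdiff]
    refine ⟨(Finset.mem_inter.1 hx).2, fun hx1 => ?_⟩
    exact (Finset.disjoint_left.1 hdisj01) (Finset.mem_inter.1 hx).1 (Finset.mem_inter.1 hx1).1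
  have hC0card : (A i0 ∩ core).card ≤ 2 :=
    (Finset.card_le_card Finset.inter_subset_left).trans_eq (hcard i0)
  have hC1card : (A i1 ∩ core).card ≤ 2 :=
    (Finset.card_le_card Finset.inter_subset_left).trans_eq (hcard i1)
  have hDcard : (core \ (A i1 ∩ core)).card = 4 - (A i1 ∩ core).card := by
    rw [Finset.card_sdiff_of_subset Finset.inter_subset_right, core_card]
  obtain ⟨B0, hB0sup, hB0sub, hB0card⟩ :=
    Finset.exists_subsuperset_card_eq (n := 2) hC0sub (by omega) (by omega)
  have hB0card2 : B0.card = 2 := by omega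
  have hB0core : B0 ⊆ core := hB0sub.trans Finset.sdiff_subset
  have hC1B1 : A i1 ∩ core ⊆ core \ B0 := by
    intro x hx
    rw [Finset.mem_sdiff]
    exact ⟨Finset.inter_subset_right hx, fun hB => (Finset.mem_sdiff.1 (hB0sub hB)).2 hx⟩
  have hB1card : (core \ B0).card = 2 := by
    rw [Finset.card_sdiff_of_subset hB0core, core_card, hB0card2]
  have hpd : ∀ i, PD (prof n va vb i) (pin n B0 (core \ B0) i) (A i) := by
    intro i
    rcases pin_cases B0 (core \ B0) i with ⟨hi, ei⟩ | ⟨hi, ei⟩ | ⟨hi, ei⟩ <;> rw [ei]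
    · have hii : i = i0 := by rw [hi0def]; exact Fin.ext (by rw [hi])
      have hprof : prof n va vb i = vrel va := by unfold prof; rw [if_pos hi]
      rw [hprof, hii]
      exact pd_fill hva hva4 hB0core hB0card2 (hcard i0) hB0sup
    · have hii : i = i1 := by rw [hi1def]; exact Fin.ext (by rw [hi])
      have hprof : prof n va vb i = vrel vb := by
        unfold prof
        rw [if_neg (by omega), if_pos hi]
      rw [hprof, hii]
      exact pd_fill hvb hvb4 Finset.sdiff_subset hB1card (hcard i1) hC1B1
    · have hprof : prof n va vb i = vrel (vex i.val) := by
        unfold prof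
        rw [if_neg (by omega), if_neg (by omega)]
      rw [hprof]
      refine pd_top2 (vex_inj _) (Finset.mem_insert_self _ _)
        (Finset.mem_insert_of_mem (Finset.mem_singleton_self _)) ?_ ?_ (hcard i)
      · show vex i.val (2 * i.val) = 0
        unfold vex
        rw [if_pos rfl]
      · show vex i.val (2 * i.val + 1) = 1
        unfold vex
        rw [if_neg (by omega), if_pos rfl]
  have hBA : pin n B0 (core \ B0) = A := by
    by_contra hne
    exact hEFF ⟨pin n B0 (core \ B0),
      pin_alloc hn hB0core Finset.sdiff_subset Finset.disjoint_sdiff, hne, hpd⟩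
  exact ⟨B0, hB0core, hB0card2, hBA.symm⟩

def va0 : ℕ → ℕ := fun x => x

def vb1 : ℕ → ℕ := fun x =>
  if x = 3 then 0 else if x = 1 then 1 else if x = 2 then 2 else if x = 0 then 3 else x

def vb1' : ℕ → ℕ := fun x =>
  if x = 1 then 0 else if x = 0 then 1 else if x = 3 then 2 else if x = 2 then 3 else x

def va0' : ℕ → ℕ := fun x =>
  if x = 1 then 0 else if x = 3 then 1 else if x = 0 then 2 else if x = 2 then 3 else x

lemma va0_inj : Function.Injective va0 := fun _ _ h => h
lemma vb1_inj : Function.Injective vb1 := by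
  intro a b h; simp only [vb1] at h; split_ifs at h <;> omega
lemma vb1'_inj : Function.Injective vb1' := by
  intro a b h; simp only [vb1'] at h; split_ifs at h <;> omega
lemma va0'_inj : Function.Injective va0' := by
  intro a b h; simp only [va0'] at h; split_ifs at h <;> omega

lemma va0_4 : ∀ x, 4 ≤ x → va0 x = x := fun _ _ => rfl
lemma vb1_4 : ∀ x, 4 ≤ x → vb1 x = x := by
  intro x hx; simp only [vb1]; split_ifs <;> omega
lemma vb1'_4 : ∀ x, 4 ≤ x → vb1' x = x := by
  intro x hx; simp only [vb1']; split_ifs <;> omega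
lemma va0'_4 : ∀ x, 4 ≤ x → va0' x = x := by
  intro x hx; simp only [va0']; split_ifs <;> omega

lemma core_two {S : Finset ℕ} (h1 : S ⊆ core) (h2 : S.card = 2) :
    S = {0,1} ∨ S = {0,2} ∨ S = {0,3} ∨ S = {1,2} ∨ S = {1,3} ∨ S = {2,3} := by
  obtain ⟨p, q, hpq, rfl⟩ := Finset.card_eq_two.1 h2
  have hp := mem_core_iff.1 (h1 (Finset.mem_insert_self _ _))
  have hq := mem_core_iff.1 (h1 (Finset.mem_insert_of_mem (Finset.mem_singleton_self _)))
  interval_cases p <;> interval_cases q <;> first | (exact absurd rfl hpq) | decide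

lemma eff_kill {n : ℕ} (hn : 2 ≤ n) {va vb : ℕ → ℕ} {AA : Fin n → Finset Obj} {S T0 : Finset ℕ}
    (hT0 : T0 ⊆ core) (hAA : AA = pin n S (core \ S)) (hne : T0 ≠ S)
    (hpd0 : PD (vrel va) T0 S) (hpd1 : PD (vrel vb) (core \ T0) (core \ S))
    (hEFF : ¬ ∃ B : Fin n → Finset Obj, IsAlloc B (XX n) ∧ B ≠ AA ∧
      ∀ i, PD (prof n va vb i) (B i) (AA i)) : False := by
  apply hEFF
  refine ⟨pin n T0 (core \ T0),
    pin_alloc hn hT0 Finset.sdiff_subset Finset.disjoint_sdiff, ?_, ?_⟩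
  · intro h
    rw [hAA] at h
    have h2 := congrFun h ⟨0, by omega⟩
    exact hne h2
  · intro i
    rw [hAA]
    rcases pin_cases T0 (core \ T0) i with ⟨hi, ei⟩ | ⟨hi, ei⟩ | ⟨hi, ei⟩ <;> rw [ei]
    · rw [show pin n S (core \ S) i = S from by unfold pin; rw [if_pos hi]]
      rw [show prof n va vb i = vrel va from by unfold prof; rw [if_pos hi]]
      exact hpd0
    · rw [show pin n S (core \ S) i = core \ S from by
        unfold pin; rw [if_neg (by omega), if_pos hi]]
      rw [show prof n va vb i = vrel vb from by
        unfold prof; rw [if_neg (by omega), if_pos hi]]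
      exact hpd1
    · rw [show pin n S (core \ S) i = ({2 * i.val, 2 * i.val + 1} : Finset ℕ) from by
        unfold pin; rw [if_neg (by omega), if_neg (by omega)]]
      exact pd_of_subset (prof_refl va vb i) (Finset.Subset.refl _)

lemma update_prof1 {n : ℕ} (h1n : 1 < n) (va vb vb' : ℕ → ℕ) :
    Function.update (prof n va vb) ⟨1, h1n⟩ (vrel vb') = prof n va vb' := by
  funext k
  rw [Function.update_apply]
  by_cases hk : k = (⟨1, h1n⟩ : Fin n)
  · rw [if_pos hk]
    have hk1 : k.val = 1 := by rw [hk]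
    unfold prof
    rw [if_neg (by omega), if_pos hk1]
  · rw [if_neg hk]
    unfold prof
    by_cases h0 : k.val = 0
    · rw [if_pos h0, if_pos h0]
    · by_cases h1 : k.val = 1
      · exact absurd (Fin.ext h1) hk
      · rw [if_neg h0, if_neg h1, if_neg h0, if_neg h1]

lemma update_prof0 {n : ℕ} (h0n : 0 < n) (va va' vb : ℕ → ℕ) :
    Function.update (prof n va vb) ⟨0, h0n⟩ (vrel va') = prof n va' vb := by
  funext k
  rw [Function.update_apply]
  by_cases hk : k = (⟨0, h0n⟩ : Fin n)
  · rw [if_pos hk]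
    have hk0 : k.val = 0 := by rw [hk]
    unfold prof
    rw [if_pos hk0]
  · rw [if_neg hk]
    unfold prof
    by_cases h0 : k.val = 0
    · exact absurd (Fin.ext h0) hk
    · by_cases h1 : k.val = 1
      · rw [if_neg h0, if_neg h0]
      · rw [if_neg h0, if_neg h0]

theorem impossibility_EFF_EF1_WSP {n : ℕ} (hn : 2 ≤ n) :
    ¬ ∃ φ : (Fin n → Obj → Obj → Prop) → Finset Obj → Fin n → Finset Obj,
      (∀ pref, LinProfile pref → ∀ X : Finset Obj, X.Nonempty →
        IsAlloc (φ pref X) X) ∧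
      (∀ pref, LinProfile pref → ∀ X : Finset Obj, X.Nonempty →
        ¬ ∃ B : Fin n → Finset Obj, IsAlloc B X ∧ B ≠ φ pref X ∧
          ∀ i, PD (pref i) (B i) (φ pref X i)) ∧
      (∀ pref, LinProfile pref → ∀ X : Finset Obj, X.Nonempty →
        ∀ i j : Fin n, ∃ S ⊆ φ pref X i, S.card ≤ 1 ∧
          PD (pref j) (φ pref X j) (φ pref X i \ S)) ∧
      (∀ pref, LinProfile pref → ∀ X : Finset Obj, X.Nonempty →
        ∀ i : Fin n, ∀ r' : Obj → Obj → Prop, IsLinearOrder Obj r' →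
          ¬ StrictPD (pref i) (φ (Function.update pref i r') X i) (φ pref X i)) := by
  rintro ⟨φ, hAl, hEFF, hEF1, hWSP⟩
  have h0n : 0 < n := by omega
  have h1n : 1 < n := by omega
  have hXne : (XX n).Nonempty := ⟨0, by rw [XX, Finset.mem_range]; omega⟩
  have lin1 : LinProfile (prof n va0 vb1) := prof_lin va0_inj vb1_inj
  have lin2 : LinProfile (prof n va0 vb1') := prof_lin va0_inj vb1'_inj
  have lin3 : LinProfile (prof n va0' vb1) := prof_lin va0'_inj vb1_inj
  obtain ⟨SP, hSPc, hSPcard, hP⟩ := structure_lemma hn φ va0 vb1 va0_inj vb1_inj va0_4 vb1_4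
    (hAl _ lin1 _ hXne) (hEFF _ lin1 _ hXne) (hEF1 _ lin1 _ hXne)
  obtain ⟨S1, hS1c, hS1card, hQ1⟩ := structure_lemma hn φ va0 vb1' va0_inj vb1'_inj va0_4 vb1'_4
    (hAl _ lin2 _ hXne) (hEFF _ lin2 _ hXne) (hEF1 _ lin2 _ hXne)
  obtain ⟨S2, hS2c, hS2card, hQ2⟩ := structure_lemma hn φ va0' vb1 va0'_inj vb1_inj va0'_4 vb1_4
    (hAl _ lin3 _ hXne) (hEFF _ lin3 _ hXne) (hEF1 _ lin3 _ hXne)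
  -- narrow S1 = {0,2}
  have hS1v : S1 = ({0,2} : Finset ℕ) := by
    rcases core_two hS1c hS1card with h | h | h | h | h | h
    · -- {0,1} : EF1 violation (owner 0, envier 1)
      exfalso
      rw [h] at hQ1
      have hk := hEF1 _ lin2 _ hXne ⟨0, h0n⟩ ⟨1, h1n⟩
      rw [hQ1] at hk
      exact ef1_kill (r := vrel vb1') (Ai := ({0,1} : Finset ℕ)) (Aj := ({2,3} : Finset ℕ))
        (t1 := 0) (t2 := 1) (by decide) (by decide) (by decide) (by decide) hk
    · exact h
    · exfalso
      rw [h] at hQ1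
      refine eff_kill (T0 := ({0,2} : Finset ℕ)) hn (by decide) hQ1 (by decide)
        (pd_pair (a := 0) (b := 2) (by decide) (by decide) (by decide) (by decide) (by decide))
        ?_ (hEFF _ lin2 _ hXne)
      rw [show core \ ({0,2} : Finset ℕ) = {1,3} from by decide,
        show core \ ({0,3} : Finset ℕ) = {1,2} from by decide]
      exact pd_pair (a := 1) (b := 3) (by decide) (by decide) (by decide) (by decide) (by decide)
    · exfalso
      rw [h] at hQ1
      refine eff_kill (T0 := ({0,2} : Finset ℕ)) hn (by decide) hQ1 (by decide)
        (pd_pair (a := 0) (b := 2) (by decide) (by decide) (by decide) (by decide) (by decide))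
        ?_ (hEFF _ lin2 _ hXne)
      rw [show core \ ({0,2} : Finset ℕ) = {1,3} from by decide,
        show core \ ({1,2} : Finset ℕ) = {0,3} from by decide]
      exact pd_pair (a := 1) (b := 3) (by decide) (by decide) (by decide) (by decide) (by decide)
    · exfalso
      rw [h] at hQ1
      refine eff_kill (T0 := ({0,2} : Finset ℕ)) hn (by decide) hQ1 (by decide)
        (pd_pair (a := 0) (b := 2) (by decide) (by decide) (by decide) (by decide) (by decide))
        ?_ (hEFF _ lin2 _ hXne)
      rw [show core \ ({0,2} : Finset ℕ) = {1,3} from by decide,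
        show core \ ({1,3} : Finset ℕ) = {0,2} from by decide]
      exact pd_pair (a := 1) (b := 3) (by decide) (by decide) (by decide) (by decide) (by decide)
    · -- {2,3} : EF1 violation (owner 1, envier 0)
      exfalso
      rw [h] at hQ1
      have hk := hEF1 _ lin2 _ hXne ⟨1, h1n⟩ ⟨0, h0n⟩
      rw [hQ1] at hk
      exact ef1_kill (r := vrel va0) (Ai := ({0,1} : Finset ℕ)) (Aj := ({2,3} : Finset ℕ))
        (t1 := 0) (t2 := 1) (by decide) (by decide) (by decide) (by decide) hk
  -- narrow S2 = {0,1}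
  have hS2v : S2 = ({0,1} : Finset ℕ) := by
    rcases core_two hS2c hS2card with h | h | h | h | h | h
    · exact h
    · -- {0,2} : EF1 violation (owner 1, envier 0)
      exfalso
      rw [h] at hQ2
      have hk := hEF1 _ lin3 _ hXne ⟨1, h1n⟩ ⟨0, h0n⟩
      rw [hQ2] at hk
      exact ef1_kill (r := vrel va0') (Ai := ({1,3} : Finset ℕ)) (Aj := ({0,2} : Finset ℕ))
        (t1 := 1) (t2 := 3) (by decide) (by decide) (by decide) (by decide) hk
    · exfalso
      rw [h] at hQ2
      refine eff_kill (T0 := ({0,1} : Finset ℕ)) hn (by decide) hQ2 (by decide)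
        (pd_pair (a := 0) (b := 1) (by decide) (by decide) (by decide) (by decide) (by decide))
        ?_ (hEFF _ lin3 _ hXne)
      rw [show core \ ({0,1} : Finset ℕ) = {2,3} from by decide,
        show core \ ({0,3} : Finset ℕ) = {1,2} from by decide]
      exact pd_pair (a := 3) (b := 2) (by decide) (by decide) (by decide) (by decide) (by decide)
    · exfalso
      rw [h] at hQ2
      refine eff_kill (T0 := ({0,1} : Finset ℕ)) hn (by decide) hQ2 (by decide)
        (pd_pair (a := 1) (b := 0) (by decide) (by decide) (by decide) (by decide) (by decide))
        ?_ (hEFF _ lin3 _ hXne)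
      rw [show core \ ({0,1} : Finset ℕ) = {2,3} from by decide,
        show core \ ({1,2} : Finset ℕ) = {0,3} from by decide]
      exact pd_pair (a := 2) (b := 3) (by decide) (by decide) (by decide) (by decide) (by decide)
    · -- {1,3} : EF1 violation (owner 0, envier 1)
      exfalso
      rw [h] at hQ2
      have hk := hEF1 _ lin3 _ hXne ⟨0, h0n⟩ ⟨1, h1n⟩
      rw [hQ2] at hk
      exact ef1_kill (r := vrel vb1) (Ai := ({1,3} : Finset ℕ)) (Aj := ({0,2} : Finset ℕ))
        (t1 := 1) (t2 := 3) (by decide) (by decide) (by decide) (by decide) hk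
    · exfalso
      rw [h] at hQ2
      refine eff_kill (T0 := ({0,1} : Finset ℕ)) hn (by decide) hQ2 (by decide)
        (pd_pair (a := 0) (b := 1) (by decide) (by decide) (by decide) (by decide) (by decide))
        ?_ (hEFF _ lin3 _ hXne)
      rw [show core \ ({0,1} : Finset ℕ) = {2,3} from by decide,
        show core \ ({2,3} : Finset ℕ) = {0,1} from by decide]
      exact pd_pair (a := 2) (b := 3) (by decide) (by decide) (by decide) (by decide) (by decide)
  -- case analysis on SP
  rcases core_two hSPc hSPcard with h | h | h | h | h | h
  · -- SP = {0,1} : agent 1 manipulates to vb1'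
    have hw := hWSP _ lin1 _ hXne ⟨1, h1n⟩ (vrel vb1') (vrel_lin vb1'_inj)
    rw [update_prof1 h1n va0 vb1 vb1', hQ1, hS1v, hP, h] at hw
    have hpd : PD (vrel vb1) ({1,3} : Finset ℕ) ({2,3} : Finset ℕ) :=
      pd_pair (a := 1) (b := 3) (by decide) (by decide) (by decide) (by decide) (by decide)
    have hnpd : ¬ PD (vrel vb1) ({2,3} : Finset ℕ) ({1,3} : Finset ℕ) :=
      not_pd_two (t1 := 1) (t2 := 3) (s0 := 3) (by decide) (by decide) (by decide)
        (by decide) (by decide)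
    exact hw ⟨hpd, hnpd⟩
  · -- SP = {0,2} : agent 0 manipulates to va0'
    have hw := hWSP _ lin1 _ hXne ⟨0, h0n⟩ (vrel va0') (vrel_lin va0'_inj)
    rw [update_prof0 h0n va0 va0' vb1, hQ2, hS2v, hP, h] at hw
    have hpd : PD (vrel va0) ({0,1} : Finset ℕ) ({0,2} : Finset ℕ) :=
      pd_pair (a := 0) (b := 1) (by decide) (by decide) (by decide) (by decide) (by decide)
    have hnpd : ¬ PD (vrel va0) ({0,2} : Finset ℕ) ({0,1} : Finset ℕ) :=
      not_pd_two (t1 := 0) (t2 := 1) (s0 := 0) (by decide) (by decide) (by decide)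
        (by decide) (by decide)
    exact hw ⟨hpd, hnpd⟩
  · -- SP = {0,3} : EFF kill with T0 = {0,1}
    rw [h] at hP
    refine eff_kill (T0 := ({0,1} : Finset ℕ)) hn (by decide) hP (by decide)
      (pd_pair (a := 0) (b := 1) (by decide) (by decide) (by decide) (by decide) (by decide))
      ?_ (hEFF _ lin1 _ hXne)
    rw [show core \ ({0,1} : Finset ℕ) = {2,3} from by decide,
      show core \ ({0,3} : Finset ℕ) = {1,2} from by decide]
    exact pd_pair (a := 3) (b := 2) (by decide) (by decide) (by decide) (by decide) (by decide)
  · -- SP = {1,2}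
    rw [h] at hP
    refine eff_kill (T0 := ({0,1} : Finset ℕ)) hn (by decide) hP (by decide)
      (pd_pair (a := 1) (b := 0) (by decide) (by decide) (by decide) (by decide) (by decide))
      ?_ (hEFF _ lin1 _ hXne)
    rw [show core \ ({0,1} : Finset ℕ) = {2,3} from by decide,
      show core \ ({1,2} : Finset ℕ) = {0,3} from by decide]
    exact pd_pair (a := 2) (b := 3) (by decide) (by decide) (by decide) (by decide) (by decide)
  · -- SP = {1,3}
    rw [h] at hP
    refine eff_kill (T0 := ({0,1} : Finset ℕ)) hn (by decide) hP (by decide)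
      (pd_pair (a := 1) (b := 0) (by decide) (by decide) (by decide) (by decide) (by decide))
      ?_ (hEFF _ lin1 _ hXne)
    rw [show core \ ({0,1} : Finset ℕ) = {2,3} from by decide,
      show core \ ({1,3} : Finset ℕ) = {0,2} from by decide]
    exact pd_pair (a := 3) (b := 2) (by decide) (by decide) (by decide) (by decide) (by decide)
  · -- SP = {2,3}
    rw [h] at hP
    refine eff_kill (T0 := ({0,1} : Finset ℕ)) hn (by decide) hP (by decide)
      (pd_pair (a := 0) (b := 1) (by decide) (by decide) (by decide) (by decide) (by decide))
      ?_ (hEFF _ lin1 _ hXne)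
    rw [show core \ ({0,1} : Finset ℕ) = {2,3} from by decide,
      show core \ ({2,3} : Finset ℕ) = {0,1} from by decide]
    exact pd_pair (a := 2) (b := 3) (by decide) (by decide) (by decide) (by decide) (by decide)
end
end
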